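/- Let J be the ideal of k[e_1,...,e_{2p}] generated by the 2×2 minors of the 2×(p-1) matrix with rows (e_1,...,e_{p-1}) and (e_{p+1},...,e_{2p-1}), and let n = ⟨e_{p+1},...,e_{2p-1}⟩. Then the natural surjection J/nJ → K is an isomorphism of modules, where K is the kernel of the surjection S/n² → S/I' and I' = J + n². -/

import Mathlib

/-- `Ev k p i` is the variable `e_i` of `k[e_1,…,e_{2p}]` for `1 ≤ i ≤ 2p`. -/
noncomputable def Ev (k : Type*) [Field k] (p : ℕ) :
    ℕ → MvPolynomial (Fin (2 * p)) k := fun i =>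
  if h : 1 ≤ i ∧ i ≤ 2 * p then MvPolynomial.X ⟨i - 1, by omega⟩ else 0

/-- `J = I₂(B)`, the ideal of `2×2` minors of the matrix with rows
`(e_1,…,e_{p-1})` and `(e_{p+1},…,e_{2p-1})`. -/
noncomputable def idealJ (k : Type*) [Field k] (p : ℕ) :
    Ideal (MvPolynomial (Fin (2 * p)) k) :=
  Ideal.span {f | ∃ i j : ℕ, 1 ≤ i ∧ i < j ∧ j ≤ p - 1 ∧
    f = Ev k p i * Ev k p (p + j) - Ev k p j * Ev k p (p + i)}

/-- `n = ⟨e_{p+1},…,e_{2p-1}⟩`. -/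
noncomputable def idealN (k : Type*) [Field k] (p : ℕ) :
    Ideal (MvPolynomial (Fin (2 * p)) k) :=
  Ideal.span {f | ∃ i : ℕ, 1 ≤ i ∧ i ≤ p - 1 ∧ f = Ev k p (p + i)}

open MvPolynomial in
/-- The substitution killing the `y`-variables `e_{p+1},…,e_{2p-1}`. -/
noncomputable def epsHom (k : Type*) [Field k] (p : ℕ) :
    MvPolynomial (Fin (2 * p)) k →ₐ[k] MvPolynomial (Fin (2 * p)) k :=
  aeval (fun v => if p ≤ v.val ∧ v.val < 2 * p - 1 then 0 else X v)

open MvPolynomial in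
/-- The "linear in `y`" part operator. -/
noncomputable def delOp (k : Type*) [Field k] (p : ℕ)
    (f : MvPolynomial (Fin (2 * p)) k) : MvPolynomial (Fin (2 * p)) k :=
  ∑ l : Fin (2 * p),
    (if p ≤ l.val ∧ l.val < 2 * p - 1 then X l else 0) * epsHom k p (pderiv l f)

namespace Stmt13Aux

open MvPolynomial

variable {k : Type*} [Field k] {p : ℕ}

lemma eps_X_y {v : Fin (2 * p)} (h : p ≤ v.val ∧ v.val < 2 * p - 1) :
    epsHom k p (X v) = 0 := by
  simp [epsHom, aeval_X, h]

lemma eps_X_x {v : Fin (2 * p)} (h : ¬(p ≤ v.val ∧ v.val < 2 * p - 1)) :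
    epsHom k p (X v) = X v := by
  simp [epsHom, aeval_X, h]

lemma X_mem_N (hp : 3 ≤ p) {v : Fin (2 * p)} (h : p ≤ v.val ∧ v.val < 2 * p - 1) :
    (X v : MvPolynomial (Fin (2 * p)) k) ∈ idealN k p := by
  apply Ideal.subset_span
  refine ⟨v.val - p + 1, by omega, by omega, ?_⟩
  rw [Ev]
  rw [dif_pos (by omega)]
  congr 1
  ext
  simp
  omega

lemma eps_mem_N (hp : 3 ≤ p) {x : MvPolynomial (Fin (2 * p)) k}
    (hx : x ∈ idealN k p) : epsHom k p x = 0 := by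
  have : idealN k p ≤ RingHom.ker (epsHom k p).toRingHom := by
    rw [idealN, Ideal.span_le]
    rintro f ⟨i, hi1, hi2, rfl⟩
    have hcond : 1 ≤ p + i ∧ p + i ≤ 2 * p := by omega
    rw [Ev, dif_pos hcond]
    exact eps_X_y (by simp only [Fin.val_mk]; omega)
  exact this hx

lemma sub_eps_mem (hp : 3 ≤ p) (c : MvPolynomial (Fin (2 * p)) k) :
    c - epsHom k p c ∈ idealN k p := by
  induction c using MvPolynomial.induction_on with
  | C a => simp [epsHom]
  | add a b ha hb =>
      have : a + b - epsHom k p (a + b) = (a - epsHom k p a) + (b - epsHom k p b) := by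
        rw [map_add]; ring
      rw [this]; exact add_mem ha hb
  | mul_X a v ha =>
      by_cases h : p ≤ v.val ∧ v.val < 2 * p - 1
      · rw [map_mul, eps_X_y h, mul_zero, sub_zero]
        exact Ideal.mul_mem_left _ a (X_mem_N hp h)
      · rw [map_mul, eps_X_x h]
        have : a * X v - epsHom k p a * X v = (a - epsHom k p a) * X v := by ring
        rw [this]
        exact Ideal.mul_mem_right _ _ ha

lemma del_add (a b : MvPolynomial (Fin (2 * p)) k) :
    delOp k p (a + b) = delOp k p a + delOp k p b := by
  simp [delOp, map_add, mul_add, Finset.sum_add_distrib]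

lemma del_sub (a b : MvPolynomial (Fin (2 * p)) k) :
    delOp k p (a - b) = delOp k p a - delOp k p b := by
  simp [delOp, map_sub, mul_sub, Finset.sum_sub_distrib]

lemma del_mul (a b : MvPolynomial (Fin (2 * p)) k) :
    delOp k p (a * b) = delOp k p a * epsHom k p b + epsHom k p a * delOp k p b := by
  rw [delOp, delOp, delOp, Finset.sum_mul, Finset.mul_sum, ← Finset.sum_add_distrib]
  apply Finset.sum_congr rfl
  intro l _
  rw [pderiv_mul, map_add, map_mul, map_mul]
  ring

/-- δ vanishes on `n²`. -/
lemma del_sq (hp : 3 ≤ p) {f : MvPolynomial (Fin (2 * p)) k}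
    (hf : f ∈ idealN k p ^ 2) : delOp k p f = 0 := by
  have key : ∀ l : Fin (2 * p), epsHom k p (pderiv l f) = 0 := by
    intro l
    rw [pow_two] at hf
    refine Submodule.mul_induction_on hf ?_ ?_
    · intro a ha b hb
      rw [pderiv_mul, map_add, map_mul, map_mul, eps_mem_N hp ha, eps_mem_N hp hb]
      ring
    · intro x y hx hy
      rw [map_add, map_add, hx, hy, add_zero]
  simp [delOp, key]

/-- δ fixes `x·y` products with `x` an `x`-variable and `y` a `y`-variable. -/
lemma del_XX {u v : Fin (2 * p)} (hu : ¬(p ≤ u.val ∧ u.val < 2 * p - 1))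
    (hv : p ≤ v.val ∧ v.val < 2 * p - 1) :
    delOp k p (X u * X v : MvPolynomial (Fin (2 * p)) k) = X u * X v := by
  have huv : u ≠ v := by
    intro h; rw [h] at hu; exact hu hv
  rw [delOp]
  rw [Finset.sum_eq_single v]
  · rw [if_pos hv, pderiv_mul, pderiv_X_self, pderiv_X_of_ne huv, map_add, map_mul,
      map_mul, eps_X_y hv, eps_X_x hu]
    simp [mul_comm]
  · intro l _ hl
    rw [pderiv_mul, pderiv_X_of_ne (Ne.symm hl), map_add, map_mul, map_mul, eps_X_y hv]
    simp
  · intro h; exact absurd (Finset.mem_univ v) h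

lemma J_le_N (hp : 3 ≤ p) : idealJ k p ≤ idealN k p := by
  rw [idealJ, Ideal.span_le]
  rintro f ⟨i, j, hi, hij, hj, rfl⟩
  have h1 : Ev k p (p + j) ∈ idealN k p :=
    Ideal.subset_span ⟨j, by omega, by omega, rfl⟩
  have h2 : Ev k p (p + i) ∈ idealN k p :=
    Ideal.subset_span ⟨i, by omega, by omega, rfl⟩
  exact sub_mem (Ideal.mul_mem_left _ _ h1) (Ideal.mul_mem_left _ _ h2)

/-- δ fixes the generators of `J`. -/
lemma del_gen (hp : 3 ≤ p) {i j : ℕ} (hi : 1 ≤ i) (hij : i < j) (hj : j ≤ p - 1) :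
    delOp k p (Ev k p i * Ev k p (p + j) - Ev k p j * Ev k p (p + i)) =
      Ev k p i * Ev k p (p + j) - Ev k p j * Ev k p (p + i) := by
  rw [del_sub]
  rw [show Ev k p i = (X ⟨i - 1, by omega⟩ : MvPolynomial (Fin (2 * p)) k) from
    by rw [Ev, dif_pos (by omega)]]
  rw [show Ev k p j = (X ⟨j - 1, by omega⟩ : MvPolynomial (Fin (2 * p)) k) from
    by rw [Ev, dif_pos (by omega)]]
  rw [show Ev k p (p + j) = (X ⟨p + j - 1, by omega⟩ : MvPolynomial (Fin (2 * p)) k) from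
    by rw [Ev, dif_pos (by omega)]]
  rw [show Ev k p (p + i) = (X ⟨p + i - 1, by omega⟩ : MvPolynomial (Fin (2 * p)) k) from
    by rw [Ev, dif_pos (by omega)]]
  rw [del_XX (by simp; omega) (by constructor <;> (simp; omega)),
    del_XX (by simp; omega) (by constructor <;> (simp; omega))]

/-- For `f ∈ J`, `f - δ f ∈ n·J`. -/
lemma sub_del_mem (hp : 3 ≤ p) {f : MvPolynomial (Fin (2 * p)) k} (hf : f ∈ idealJ k p) :
    f - delOp k p f ∈ idealN k p * idealJ k p := by
  refine Submodule.span_induction ?_ ?_ ?_ ?_ hf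
  · rintro g ⟨i, j, hi, hij, hj, rfl⟩
    rw [del_gen hp hi hij hj, sub_self]
    exact zero_mem _
  · simp [delOp]
  · intro x y _ _ hx hy
    rw [del_add]
    have : x + y - (delOp k p x + delOp k p y)
        = (x - delOp k p x) + (y - delOp k p y) := by ring
    rw [this]; exact add_mem hx hy
  · intro c x hxJ ih
    have hxJ' : x ∈ idealJ k p := hxJ
    rw [smul_eq_mul, del_mul, eps_mem_N hp (J_le_N hp hxJ'), mul_zero, zero_add]
    have : c * x - epsHom k p c * delOp k p x
        = (c - epsHom k p c) * x + epsHom k p c * (x - delOp k p x) := by ring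
    rw [this]
    exact add_mem (Ideal.mul_mem_mul (sub_eps_mem hp c) hxJ')
      (Ideal.mul_mem_left _ _ ih)

/-- Core algebraic fact: `J ⊓ n² = n·J`. -/
lemma inf_eq (hp : 3 ≤ p) :
    idealJ k p ⊓ idealN k p ^ 2 = idealN (k := k) p * idealJ k p := by
  apply le_antisymm
  · rintro f ⟨hfJ, hfn⟩
    have h1 := sub_del_mem hp hfJ
    rwa [del_sq hp hfn, sub_zero] at h1
  · refine le_inf (Ideal.mul_le_right) ?_
    rw [pow_two]
    exact Ideal.mul_mono le_rfl (J_le_N hp)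

end Stmt13Aux

set_option maxHeartbeats 1000000 in
set_option synthInstance.maxHeartbeats 500000 in
open Stmt13Aux in
/-- the natural surjection `J/nJ → K` is an isomorphism, where
`K = ker(S/n² → S/I')` with `I' = J + n²`.  Formally, the composite
`J → S → S/n²` has image exactly `K` (the image of `I'` in `S/n²`) and kernel
exactly `nJ`, which together say precisely that the induced map
`J/nJ → K` is an isomorphism. -/
theorem stmt13 (k : Type*) [Field k] (p : ℕ) (hp : 3 ≤ p) :
    LinearMap.range ((Submodule.mkQ ((idealN k p ^ 2 : Ideal (MvPolynomial (Fin (2 * p)) k)) :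
          Submodule (MvPolynomial (Fin (2 * p)) k) (MvPolynomial (Fin (2 * p)) k))).comp
        (Submodule.subtype (idealJ k p :
          Submodule (MvPolynomial (Fin (2 * p)) k) (MvPolynomial (Fin (2 * p)) k)))) =
      Submodule.map
        (Submodule.mkQ ((idealN k p ^ 2 : Ideal (MvPolynomial (Fin (2 * p)) k)) :
          Submodule (MvPolynomial (Fin (2 * p)) k) (MvPolynomial (Fin (2 * p)) k)))
        ((idealJ k p + idealN k p ^ 2 : Ideal (MvPolynomial (Fin (2 * p)) k)) :
          Submodule (MvPolynomial (Fin (2 * p)) k) (MvPolynomial (Fin (2 * p)) k)) ∧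
    LinearMap.ker ((Submodule.mkQ ((idealN k p ^ 2 : Ideal (MvPolynomial (Fin (2 * p)) k)) :
          Submodule (MvPolynomial (Fin (2 * p)) k) (MvPolynomial (Fin (2 * p)) k))).comp
        (Submodule.subtype (idealJ k p :
          Submodule (MvPolynomial (Fin (2 * p)) k) (MvPolynomial (Fin (2 * p)) k)))) =
      idealN k p • (⊤ : Submodule (MvPolynomial (Fin (2 * p)) k) (idealJ k p)) := by

  constructor
  · rw [LinearMap.range_comp, Submodule.range_subtype]
    have hsup : ((idealJ k p + idealN k p ^ 2 : Ideal (MvPolynomial (Fin (2 * p)) k)) :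
        Submodule (MvPolynomial (Fin (2 * p)) k) (MvPolynomial (Fin (2 * p)) k))
        = (idealJ k p : Submodule _ _) ⊔ (idealN k p ^ 2 : Ideal _) := rfl
    rw [hsup, Submodule.map_sup]
    have hbot : Submodule.map
        (Submodule.mkQ ((idealN k p ^ 2 : Ideal (MvPolynomial (Fin (2 * p)) k)) : Submodule _ _))
        ((idealN k p ^ 2 : Ideal (MvPolynomial (Fin (2 * p)) k)) : Submodule _ _) = ⊥ := by
      rw [eq_bot_iff]
      rintro x ⟨y, hy, rfl⟩
      rw [Submodule.mem_bot, Submodule.mkQ_apply, Submodule.Quotient.mk_eq_zero]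
      exact hy
    rw [hbot, sup_bot_eq]
  · rw [LinearMap.ker_comp, Submodule.ker_mkQ]
    apply Submodule.map_injective_of_injective (Submodule.injective_subtype
      ((idealJ k p : Submodule (MvPolynomial (Fin (2 * p)) k) (MvPolynomial (Fin (2 * p)) k))))
    rw [Submodule.map_comap_subtype, Submodule.map_smul'', Submodule.map_top,
      Submodule.range_subtype]
    show (idealJ k p ⊓ idealN k p ^ 2 : Ideal _) = idealN k p • idealJ k p
    rw [Ideal.smul_eq_mul]
    exact inf_eq hp
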